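/- Let n ≥ 1 and, for each i ∈ {1,…,n}, let c_i > 0, p_i ≥ 1 and α_i ∈ ℝ satisfy ∏_{i=1}^n p_i > 1 and ∑_{i=1}^n α_i ≤ n. Then there do not exist differentiable functions x_1,…,x_n : [1,∞) → (0,∞) such that x_i'(t) ≥ c_i · t^{−α_i} · x_{i−1}(t)^{p_i} for all t ≥ 1 and all i, where indices are taken cyclically (x_0 := x_n) and the exponentiation is the real power of a positive real. -/

import Mathlib

open Real Set Filter Fin.NatCast

lemma aux_mono {f g f' g' : ℝ → ℝ} {a b : ℝ} (h1 : 1 ≤ a) (hab : a ≤ b)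
    (hf : ∀ t, 1 ≤ t → HasDerivWithinAt f (f' t) (Set.Ici 1) t)
    (hg : ∀ t, a ≤ t → t ≤ b → HasDerivAt g (g' t) t)
    (hle : ∀ t, a ≤ t → t ≤ b → g' t ≤ f' t) :
    g b - g a ≤ f b - f a := by
  have hsub : Set.Icc a b ⊆ Set.Ici 1 := fun t ht => le_trans h1 ht.1
  have hmono : MonotoneOn (fun t => f t - g t) (Set.Icc a b) := by
    apply monotoneOn_of_hasDerivWithinAt_nonneg (f' := fun t => f' t - g' t)
      (convex_Icc a b)
    · intro t ht
      exact (((hf t (hsub ht)).mono hsub).sub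
        ((hg t ht.1 ht.2).hasDerivWithinAt)).continuousWithinAt
    · intro t ht
      rw [interior_Icc] at ht
      have h1t : (1:ℝ) ≤ t := le_trans h1 ht.1.le
      have : HasDerivAt f (f' t) t :=
        (hf t h1t).hasDerivAt (Ici_mem_nhds (lt_of_le_of_lt h1 ht.1))
      exact (this.sub (hg t ht.1.le ht.2.le)).hasDerivWithinAt
    · intro t ht
      rw [interior_Icc] at ht
      exact sub_nonneg.2 (hle t ht.1.le ht.2.le)
  have h := hmono (Set.left_mem_Icc.2 hab) (Set.right_mem_Icc.2 hab) hab
  simp only at h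
  linarith

lemma aux_U1 {u v v' : ℝ → ℝ} {c α p A a m T : ℝ}
    (hc : 0 < c) (hp : 1 ≤ p) (hA : 0 < A) (hm : 0 ≤ m) (hT : 3 ≤ T)
    (hu : ∀ t, T ≤ t → A * t ^ a * Real.log t ^ m ≤ u t)
    (hv : ∀ t, 1 ≤ t → HasDerivWithinAt v (v' t) (Set.Ici 1) t)
    (hvpos : ∀ t, 1 ≤ t → 0 < v t)
    (hvi : ∀ t, 1 ≤ t → c * t ^ (-α) * u t ^ p ≤ v' t) :
    ∃ A' T', 0 < A' ∧ 3 ≤ T' ∧ ∀ t, T' ≤ t →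
      A' * t ^ (p * a + 1 - α) * Real.log t ^ (p * m) ≤ v t := by
  have hp0 : (0:ℝ) < p := lt_of_lt_of_le one_pos hp
  have he2 : (2:ℝ) ≤ Real.exp 1 := by have := Real.add_one_le_exp 1; linarith
  have he0 : (0:ℝ) < Real.exp 1 := Real.exp_pos 1
  set C0 : ℝ := c * A ^ p * Real.exp (-|p * a - α|) * (2:ℝ) ^ (-(p * m)) with hC0
  have hC0pos : 0 < C0 := by positivity
  refine ⟨C0 / 2, Real.exp 1 * max T (Real.exp 2), by positivity, ?_, ?_⟩
  · calc (3:ℝ) ≤ 1 * Real.exp 2 := by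
          have := Real.add_one_le_exp 2; linarith
      _ ≤ Real.exp 1 * max T (Real.exp 2) := by
          apply mul_le_mul (by linarith) (le_max_right _ _) (by positivity) he0.le
  intro t ht
  have ht0 : (0:ℝ) < t := lt_of_lt_of_le (by positivity) ht
  set s₀ : ℝ := t / Real.exp 1 with hs₀def
  have hs₀max : max T (Real.exp 2) ≤ s₀ := by
    rw [hs₀def, le_div_iff₀ he0]
    calc max T (Real.exp 2) * Real.exp 1 = Real.exp 1 * max T (Real.exp 2) := by ring
      _ ≤ t := ht
  have hs₀T : T ≤ s₀ := le_trans (le_max_left _ _) hs₀max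
  have hs₀1 : (1:ℝ) ≤ s₀ := by
    have : (3:ℝ) ≤ s₀ := le_trans hT hs₀T; linarith
  have hs₀t : s₀ ≤ t := by
    rw [hs₀def, div_le_iff₀ he0]
    nlinarith [ht0.le]
  have hlogt3 : (3:ℝ) ≤ Real.log t := by
    have h3 : Real.exp 3 ≤ t := by
      have : Real.exp 1 * Real.exp 2 ≤ Real.exp 1 * max T (Real.exp 2) := by
        apply mul_le_mul_of_nonneg_left (le_max_right _ _) he0.le
      calc Real.exp 3 = Real.exp 1 * Real.exp 2 := by
            rw [← Real.exp_add]; norm_num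
        _ ≤ t := le_trans this ht
    calc (3:ℝ) = Real.log (Real.exp 3) := (Real.log_exp 3).symm
      _ ≤ Real.log t := Real.log_le_log (Real.exp_pos 3) h3
  have hlogs₀ : Real.log s₀ = Real.log t - 1 := by
    rw [hs₀def, Real.log_div (ne_of_gt ht0) (ne_of_gt he0), Real.log_exp]
  -- key pointwise bound on [s₀, t]
  set K0 : ℝ := C0 * t ^ (p * a - α) * Real.log t ^ (p * m) with hK0
  have hK0pos : 0 < K0 := by
    have := Real.rpow_pos_of_pos ht0 (p * a - α)
    have hlt0 : (0:ℝ) < Real.log t := by linarith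
    have := Real.rpow_pos_of_pos hlt0 (p * m)
    positivity
  have key : ∀ s, s₀ ≤ s → s ≤ t → K0 ≤ c * s ^ (-α) * u s ^ p := by
    intro s hss hst
    have hs0 : (0:ℝ) < s := lt_of_lt_of_le (by linarith) hss
    have hs1 : (1:ℝ) ≤ s := le_trans hs₀1 hss
    have hsT : T ≤ s := le_trans hs₀T hss
    have hlogs_ge : Real.log t - 1 ≤ Real.log s := by
      rw [← hlogs₀]; exact Real.log_le_log (by linarith) hss
    have hlogs_half : Real.log t / 2 ≤ Real.log s := by linarith
    have hlogs0 : (0:ℝ) ≤ Real.log s := by linarith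
    have hus : A * s ^ a * Real.log s ^ m ≤ u s := hu s hsT
    have hbase_pos : 0 < A * s ^ a * Real.log s ^ m := by
      have := Real.rpow_pos_of_pos hs0 a
      have hls : (0:ℝ) < Real.log s := by linarith
      have := Real.rpow_pos_of_pos hls m
      positivity
    -- step D : exp(-|p*a-α|) * t^(p*a-α) ≤ s^(p*a-α)
    have stepD : Real.exp (-|p * a - α|) * t ^ (p * a - α) ≤ s ^ (p * a - α) := by
      set b := p * a - α with hb
      rcases le_or_gt 0 b with hbpos | hbneg
      · have h1 : (t / Real.exp 1) ^ b ≤ s ^ b :=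
          Real.rpow_le_rpow (by positivity) hss hbpos
        have h2 : (t / Real.exp 1) ^ b = t ^ b * Real.exp (-b) := by
          rw [Real.div_rpow ht0.le he0.le, Real.exp_one_rpow, Real.exp_neg,
            div_eq_mul_inv]
        have h3 : Real.exp (-|b|) ≤ Real.exp (-b) :=
          Real.exp_le_exp.2 (neg_le_neg (le_abs_self b))
        have htb : (0:ℝ) < t ^ b := Real.rpow_pos_of_pos ht0 b
        nlinarith
      · have h1 : t ^ b ≤ s ^ b := Real.rpow_le_rpow_of_nonpos hs0 hst hbneg.le
        have h2 : Real.exp (-|b|) ≤ 1 := by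
          rw [← Real.exp_zero]
          exact Real.exp_le_exp.2 (by simp [abs_nonneg])
        have htb : (0:ℝ) < t ^ b := Real.rpow_pos_of_pos ht0 b
        nlinarith
    -- step E : 2^(-(p*m)) * log t^(p*m) ≤ log s^(p*m)
    have stepE : (2:ℝ) ^ (-(p * m)) * Real.log t ^ (p * m) ≤ Real.log s ^ (p * m) := by
      have h1 : (Real.log t / 2) ^ (p * m) ≤ Real.log s ^ (p * m) :=
        Real.rpow_le_rpow (by linarith) hlogs_half (by positivity)
      have h2 : (Real.log t / 2) ^ (p * m) = Real.log t ^ (p * m) * (2:ℝ) ^ (-(p * m)) := by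
        rw [Real.div_rpow (by linarith) (by norm_num), Real.rpow_neg (by norm_num),
          div_eq_mul_inv]
      linarith [h1, h2.symm.le, h2.le]
    -- algebraic identity
    have e1 : (A * s ^ a * Real.log s ^ m) ^ p
        = A ^ p * s ^ (p * a) * Real.log s ^ (p * m) := by
      rw [Real.mul_rpow (by positivity) (by positivity),
        Real.mul_rpow (by positivity) (by positivity),
        ← Real.rpow_mul hs0.le, ← Real.rpow_mul hlogs0, mul_comm a p, mul_comm m p]
    have e2 : c * s ^ (-α) * (A ^ p * s ^ (p * a) * Real.log s ^ (p * m))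
        = c * A ^ p * (s ^ (p * a - α) * Real.log s ^ (p * m)) := by
      rw [sub_eq_add_neg, Real.rpow_add hs0]; ring
    calc K0 = c * A ^ p * ((Real.exp (-|p * a - α|) * t ^ (p * a - α)) *
        ((2:ℝ) ^ (-(p * m)) * Real.log t ^ (p * m))) := by rw [hK0, hC0]; ring
      _ ≤ c * A ^ p * (s ^ (p * a - α) * Real.log s ^ (p * m)) := by
          apply mul_le_mul_of_nonneg_left _ (by positivity)
          apply mul_le_mul stepD stepE (by positivity)
            (le_of_lt (Real.rpow_pos_of_pos hs0 _))
      _ = c * s ^ (-α) * (A * s ^ a * Real.log s ^ m) ^ p := by rw [e1, e2]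
      _ ≤ c * s ^ (-α) * u s ^ p := by
          have h := Real.rpow_le_rpow hbase_pos.le hus hp0.le
          have hrp : (0:ℝ) < s ^ (-α) := Real.rpow_pos_of_pos hs0 _
          exact mul_le_mul_of_nonneg_left h (by positivity)
  -- comparison on [s₀, t]
  have hcomp : K0 * t - K0 * s₀ ≤ v t - v s₀ := by
    apply aux_mono hs₀1 hs₀t hv
    · intro s _ _
      simpa using (hasDerivAt_id s).const_mul K0
    · intro s hs1 hs2
      exact le_trans (key s hs1 hs2) (hvi s (le_trans hs₀1 hs1))
  have hvs₀ : 0 < v s₀ := hvpos s₀ hs₀1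
  have hs₀half : K0 * s₀ ≤ K0 * (t / 2) := by
    apply mul_le_mul_of_nonneg_left _ hK0pos.le
    rw [hs₀def, div_le_div_iff₀ he0 (by norm_num)]
    nlinarith
  have hvt : K0 * t / 2 ≤ v t := by linarith
  have hfin : C0 / 2 * t ^ (p * a + 1 - α) * Real.log t ^ (p * m) = K0 * t / 2 := by
    have hx : p * a + 1 - α = (p * a - α) + 1 := by ring
    rw [hx, Real.rpow_add ht0, Real.rpow_one, hK0]; ring
  rw [hfin]; exact hvt

lemma aux_U2 {u v v' : ℝ → ℝ} {c α p A a m T : ℝ}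
    (hc : 0 < c) (hp : 1 ≤ p) (hA : 0 < A) (hm : 0 ≤ m) (hT : 3 ≤ T)
    (hcrit : p * a - α = -1)
    (hu : ∀ t, T ≤ t → A * t ^ a * Real.log t ^ m ≤ u t)
    (hv : ∀ t, 1 ≤ t → HasDerivWithinAt v (v' t) (Set.Ici 1) t)
    (hvpos : ∀ t, 1 ≤ t → 0 < v t)
    (hvi : ∀ t, 1 ≤ t → c * t ^ (-α) * u t ^ p ≤ v' t) :
    ∃ A' T', 0 < A' ∧ 3 ≤ T' ∧ ∀ t, T' ≤ t →
      A' * t ^ (0:ℝ) * Real.log t ^ (p * m + 1) ≤ v t := by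
  have hp0 : (0:ℝ) < p := lt_of_lt_of_le one_pos hp
  set M : ℝ := p * m with hM
  have hM0 : 0 ≤ M := by positivity
  set B : ℝ := c * A ^ p / (M + 1) with hB
  have hBpos : 0 < B := by positivity
  set T₀ : ℝ := max T (Real.exp 2) with hT₀
  have hexp23 : (3:ℝ) ≤ Real.exp 2 := by have := Real.add_one_le_exp 2; linarith
  have hT₀3 : (3:ℝ) ≤ T₀ := le_trans hexp23 (le_max_right _ _)
  have hT₀1 : (1:ℝ) ≤ T₀ := by linarith
  have hT₀0 : (0:ℝ) < T₀ := by linarith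
  have hlogT₀ : (2:ℝ) ≤ Real.log T₀ := by
    calc (2:ℝ) = Real.log (Real.exp 2) := (Real.log_exp 2).symm
      _ ≤ Real.log T₀ := Real.log_le_log (Real.exp_pos 2) (le_max_right _ _)
  -- derivative facts for g s = B * (log s)^(M+1)
  have hder : ∀ s, T₀ ≤ s →
      HasDerivAt (fun z => B * Real.log z ^ (M + 1))
        (B * ((M + 1) * Real.log s ^ M * s⁻¹)) s := by
    intro s hs
    have hs0 : (0:ℝ) < s := lt_of_lt_of_le hT₀0 hs
    have hlogs : (2:ℝ) ≤ Real.log s :=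
      le_trans hlogT₀ (Real.log_le_log hT₀0 hs)
    have h1 : HasDerivAt Real.log s⁻¹ s := Real.hasDerivAt_log (ne_of_gt hs0)
    have h2 : HasDerivAt (fun z : ℝ => z ^ (M + 1))
        ((M + 1) * Real.log s ^ (M + 1 - 1)) (Real.log s) :=
      Real.hasDerivAt_rpow_const (Or.inl (by linarith))
    have h3 := (h2.comp s h1).const_mul B
    have hMs : M + 1 - 1 = M := by ring
    rw [hMs] at h3
    exact h3
  -- g' ≤ v'
  have key : ∀ s, T₀ ≤ s → B * ((M + 1) * Real.log s ^ M * s⁻¹) ≤ v' s := by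
    intro s hs
    have hs0 : (0:ℝ) < s := lt_of_lt_of_le hT₀0 hs
    have hs1 : (1:ℝ) ≤ s := le_trans hT₀1 hs
    have hsT : T ≤ s := le_trans (le_max_left _ _) hs
    have hlogs : (2:ℝ) ≤ Real.log s :=
      le_trans hlogT₀ (Real.log_le_log hT₀0 hs)
    have hlogs0 : (0:ℝ) ≤ Real.log s := by linarith
    have hus : A * s ^ a * Real.log s ^ m ≤ u s := hu s hsT
    have hbase_pos : 0 < A * s ^ a * Real.log s ^ m := by
      have := Real.rpow_pos_of_pos hs0 a
      have hls : (0:ℝ) < Real.log s := by linarith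
      have := Real.rpow_pos_of_pos hls m
      positivity
    have e1 : (A * s ^ a * Real.log s ^ m) ^ p
        = A ^ p * s ^ (p * a) * Real.log s ^ (p * m) := by
      rw [Real.mul_rpow (by positivity) (by positivity),
        Real.mul_rpow (by positivity) (by positivity),
        ← Real.rpow_mul hs0.le, ← Real.rpow_mul hlogs0, mul_comm a p, mul_comm m p]
    have e2 : c * s ^ (-α) * (A ^ p * s ^ (p * a) * Real.log s ^ (p * m))
        = c * A ^ p * (s ^ (p * a - α) * Real.log s ^ (p * m)) := by
      rw [sub_eq_add_neg, Real.rpow_add hs0]; ring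
    have e3 : c * s ^ (-α) * (A * s ^ a * Real.log s ^ m) ^ p
        = c * A ^ p * (s⁻¹ * Real.log s ^ M) := by
      rw [e1, e2, hcrit, Real.rpow_neg_one, hM]
    have h4 : c * s ^ (-α) * (A * s ^ a * Real.log s ^ m) ^ p
        ≤ c * s ^ (-α) * u s ^ p := by
      have h := Real.rpow_le_rpow hbase_pos.le hus hp0.le
      have hrp : (0:ℝ) < s ^ (-α) := Real.rpow_pos_of_pos hs0 _
      exact mul_le_mul_of_nonneg_left h (by positivity)
    have h5 : B * ((M + 1) * Real.log s ^ M * s⁻¹)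
        = c * A ^ p * (s⁻¹ * Real.log s ^ M) := by
      rw [hB]; field_simp
    rw [h5, ← e3]
    exact le_trans h4 (hvi s hs1)
  refine ⟨B / 2, max (Real.exp (2 * Real.log T₀)) T₀, by positivity,
    le_trans hT₀3 (le_max_right _ _), ?_⟩
  intro t ht
  have htT₀ : T₀ ≤ t := le_trans (le_max_right _ _) ht
  have ht0 : (0:ℝ) < t := lt_of_lt_of_le hT₀0 htT₀
  have hlogt : 2 * Real.log T₀ ≤ Real.log t := by
    calc 2 * Real.log T₀ = Real.log (Real.exp (2 * Real.log T₀)) :=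
        (Real.log_exp _).symm
      _ ≤ Real.log t := Real.log_le_log (Real.exp_pos _)
        (le_trans (le_max_left _ _) ht)
  have hlogt0 : (0:ℝ) < Real.log t := by linarith
  have hcomp : (B * Real.log t ^ (M + 1)) - (B * Real.log T₀ ^ (M + 1))
      ≤ v t - v T₀ := by
    apply aux_mono hT₀1 htT₀ hv
    · intro s hs _; exact hder s hs
    · intro s hs _; exact key s hs
  have hvT₀ : 0 < v T₀ := hvpos T₀ hT₀1
  have hgrow : 2 * Real.log T₀ ^ (M + 1) ≤ Real.log t ^ (M + 1) := by
    have r1 : (2 * Real.log T₀) ^ (M + 1) ≤ Real.log t ^ (M + 1) :=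
      Real.rpow_le_rpow (by linarith) hlogt (by linarith)
    have r2 : (2 * Real.log T₀) ^ (M + 1)
        = (2:ℝ) ^ (M + 1) * Real.log T₀ ^ (M + 1) :=
      Real.mul_rpow (by norm_num) (by linarith)
    have r3 : (2:ℝ) ≤ (2:ℝ) ^ (M + 1) := by
      calc (2:ℝ) = (2:ℝ) ^ (1:ℝ) := (Real.rpow_one 2).symm
        _ ≤ (2:ℝ) ^ (M + 1) :=
          Real.rpow_le_rpow_of_exponent_le one_le_two (by linarith)
    have r4 : (0:ℝ) ≤ Real.log T₀ ^ (M + 1) :=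
      (Real.rpow_pos_of_pos (by linarith) _).le
    nlinarith
  have hfin : B / 2 * Real.log t ^ (M + 1) ≤ v t := by
    have hBl : (0:ℝ) ≤ B := hBpos.le
    nlinarith
  have : B / 2 * t ^ (0:ℝ) * Real.log t ^ (p * m + 1)
      = B / 2 * Real.log t ^ (M + 1) := by
    rw [Real.rpow_zero, hM]; ring
  rw [this]; exact hfin

lemma aux_osgood2 {y y' : ℝ → ℝ} {ρ lC σ T : ℝ} (hρ : 0 < ρ) (hσ : 1 < σ)
    (hT : 1 ≤ T)
    (hy : ∀ t, 1 ≤ t → HasDerivWithinAt y (y' t) (Set.Ici 1) t)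
    (hkey : ∀ t, 1 ≤ t → Real.exp (lC - σ * Real.log t + ρ * y t) ≤ y' t)
    (hbig : Real.exp (-(ρ * y T)) < ρ * Real.exp lC / (σ - 1) * T ^ (1 - σ)) :
    False := by
  set D : ℝ := ρ * Real.exp lC / (σ - 1) with hD
  have hDpos : 0 < D := by
    have : (0:ℝ) < σ - 1 := by linarith
    positivity
  set w : ℝ → ℝ := fun t => Real.exp (-(ρ * y t)) - D * t ^ (1 - σ) with hw
  set w' : ℝ → ℝ := fun t =>
    -(ρ * y' t) * Real.exp (-(ρ * y t)) - D * ((1 - σ) * t ^ (-σ)) with hw'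
  have hwder : ∀ t, 1 ≤ t → HasDerivWithinAt w (w' t) (Set.Ici 1) t := by
    intro t ht
    have ht0 : (0:ℝ) < t := lt_of_lt_of_le one_pos ht
    have h1 : HasDerivWithinAt (fun t => Real.exp (-(ρ * y t)))
        (-(ρ * y' t) * Real.exp (-(ρ * y t))) (Set.Ici 1) t := by
      have := (((hy t ht).const_mul ρ).neg).exp
      convert this using 1
      · rfl
      · exact mul_comm (-(ρ * y' t)) (Real.exp (-(ρ * y t)))
    have h2 : HasDerivAt (fun t : ℝ => D * t ^ (1 - σ))
        (D * ((1 - σ) * t ^ (1 - σ - 1))) t :=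
      (Real.hasDerivAt_rpow_const (Or.inl (ne_of_gt ht0))).const_mul D
    have h3 : (1 - σ - 1 : ℝ) = -σ := by ring
    rw [h3] at h2
    exact h1.sub h2.hasDerivWithinAt
  have hwle : ∀ t, 1 ≤ t → w' t ≤ 0 := by
    intro t ht
    have ht0 : (0:ℝ) < t := lt_of_lt_of_le one_pos ht
    have hts : t ^ (-σ) = Real.exp (-σ * Real.log t) := by
      rw [Real.rpow_def_of_pos ht0, mul_comm]
    have hkt := hkey t ht
    have hexp : Real.exp (lC - σ * Real.log t + ρ * y t) * Real.exp (-(ρ * y t))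
        = Real.exp lC * t ^ (-σ) := by
      rw [← Real.exp_add, hts, ← Real.exp_add]
      ring_nf
    have hst : ρ * Real.exp lC * t ^ (-σ) ≤ ρ * y' t * Real.exp (-(ρ * y t)) := by
      have hpos : (0:ℝ) < Real.exp (-(ρ * y t)) := Real.exp_pos _
      have := mul_le_mul_of_nonneg_right hkt hpos.le
      rw [hexp] at this
      nlinarith
    have hDs : D * (σ - 1) = ρ * Real.exp lC := by
      rw [hD, div_mul_cancel₀]
      · linarith
    have htspos : (0:ℝ) < t ^ (-σ) := Real.rpow_pos_of_pos ht0 _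
    show -(ρ * y' t) * Real.exp (-(ρ * y t)) - D * ((1 - σ) * t ^ (-σ)) ≤ 0
    nlinarith
  have hmono : ∀ t, T ≤ t → w t ≤ w T := by
    intro t ht
    have := aux_mono hT ht (f := fun t => -(w t)) (f' := fun t => -(w' t))
      (g := fun _ => (0:ℝ)) (g' := fun _ => (0:ℝ))
      (fun s hs => (hwder s hs).neg)
      (fun s _ _ => hasDerivAt_const s 0)
      (fun s hs _ => by simpa using hwle s (le_trans hT hs))
    simp only [sub_zero] at this
    linarith
  have hwT : w T < 0 := by
    simp only [hw]
    linarith [hbig]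
  -- w t ≥ -D t^{1-σ} → 0, contradiction
  have htend : Tendsto (fun t : ℝ => D * t ^ (1 - σ)) atTop (nhds 0) := by
    have h := tendsto_rpow_neg_atTop (y := σ - 1) (by linarith)
    have h2 : Tendsto (fun t : ℝ => D * t ^ (-(σ - 1))) atTop (nhds 0) := by
      simpa using h.const_mul D
    apply h2.congr
    intro t
    norm_num
  have hev : ∀ᶠ t in atTop, D * t ^ (1 - σ) < -(w T) := by
    apply (tendsto_order.1 htend).2
    linarith
  obtain ⟨t, hlt, htT⟩ := (hev.and (eventually_ge_atTop T)).exists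
  have h1 := hmono t htT
  have h2 : 0 < Real.exp (-(ρ * y t)) := Real.exp_pos _
  have h3 : w t = Real.exp (-(ρ * y t)) - D * t ^ (1 - σ) := rfl
  linarith

lemma aux_osgood1 {y y' : ℝ → ℝ} {ρ lC σ : ℝ} (hρ : 0 < ρ) (hσ : σ ≤ 1)
    (hy : ∀ t, 1 ≤ t → HasDerivWithinAt y (y' t) (Set.Ici 1) t)
    (hkey : ∀ t, 1 ≤ t → Real.exp (lC - σ * Real.log t + ρ * y t) ≤ y' t) :
    False := by
  set E : ℝ := ρ * Real.exp lC with hE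
  have hEpos : 0 < E := by positivity
  set w : ℝ → ℝ := fun t => Real.exp (-(ρ * y t)) + E * Real.log t with hw
  set w' : ℝ → ℝ := fun t =>
    -(ρ * y' t) * Real.exp (-(ρ * y t)) + E * t⁻¹ with hw'
  have hwder : ∀ t, 1 ≤ t → HasDerivWithinAt w (w' t) (Set.Ici 1) t := by
    intro t ht
    have ht0 : (0:ℝ) < t := lt_of_lt_of_le one_pos ht
    have h1 : HasDerivWithinAt (fun t => Real.exp (-(ρ * y t)))
        (-(ρ * y' t) * Real.exp (-(ρ * y t))) (Set.Ici 1) t := by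
      have := (((hy t ht).const_mul ρ).neg).exp
      convert this using 1
      · rfl
      · exact mul_comm (-(ρ * y' t)) (Real.exp (-(ρ * y t)))
    have h2 : HasDerivAt (fun t : ℝ => E * Real.log t) (E * t⁻¹) t :=
      (Real.hasDerivAt_log (ne_of_gt ht0)).const_mul E
    exact h1.add h2.hasDerivWithinAt
  have hwle : ∀ t, 1 ≤ t → w' t ≤ 0 := by
    intro t ht
    have ht0 : (0:ℝ) < t := lt_of_lt_of_le one_pos ht
    have hts : t ^ (-σ) = Real.exp (-σ * Real.log t) := by
      rw [Real.rpow_def_of_pos ht0, mul_comm]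
    have hkt := hkey t ht
    have hexp : Real.exp (lC - σ * Real.log t + ρ * y t) * Real.exp (-(ρ * y t))
        = Real.exp lC * t ^ (-σ) := by
      rw [← Real.exp_add, hts, ← Real.exp_add]
      ring_nf
    have hst : ρ * Real.exp lC * t ^ (-σ) ≤ ρ * y' t * Real.exp (-(ρ * y t)) := by
      have hpos : (0:ℝ) < Real.exp (-(ρ * y t)) := Real.exp_pos _
      have := mul_le_mul_of_nonneg_right hkt hpos.le
      rw [hexp] at this
      nlinarith
    have hti : t⁻¹ ≤ t ^ (-σ) := by
      rw [← Real.rpow_neg_one t]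
      exact Real.rpow_le_rpow_of_exponent_le ht (by linarith)
    have htipos : (0:ℝ) < t⁻¹ := by positivity
    show -(ρ * y' t) * Real.exp (-(ρ * y t)) + E * t⁻¹ ≤ 0
    have : E * t⁻¹ ≤ E * t ^ (-σ) := mul_le_mul_of_nonneg_left hti hEpos.le
    rw [hE] at this ⊢
    nlinarith
  have hmono : ∀ t, 1 ≤ t → w t ≤ w 1 := by
    intro t ht
    have := aux_mono le_rfl ht (f := fun t => -(w t)) (f' := fun t => -(w' t))
      (g := fun _ => (0:ℝ)) (g' := fun _ => (0:ℝ))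
      (fun s hs => (hwder s hs).neg)
      (fun s _ _ => hasDerivAt_const s 0)
      (fun s hs _ => by simpa using hwle s hs)
    simp only [sub_zero] at this
    linarith
  set t₀ : ℝ := Real.exp ((w 1) / E + 1) with ht₀
  have ht₀1 : (1:ℝ) ≤ t₀ := by
    rw [ht₀]
    have h2 : (0:ℝ) < Real.exp (-(ρ * y 1)) := Real.exp_pos _
    have hw1 : 0 < w 1 := by
      have : w 1 = Real.exp (-(ρ * y 1)) + E * Real.log 1 := rfl
      rw [Real.log_one] at this
      linarith [this]
    have : (0:ℝ) ≤ w 1 / E + 1 := by positivity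
    calc (1:ℝ) = Real.exp 0 := Real.exp_zero.symm
      _ ≤ _ := Real.exp_le_exp.2 this
  have h1 := hmono t₀ ht₀1
  have h2 : Real.log t₀ = w 1 / E + 1 := by rw [ht₀, Real.log_exp]
  have h3 : 0 < Real.exp (-(ρ * y t₀)) := Real.exp_pos _
  have h4 : w t₀ = Real.exp (-(ρ * y t₀)) + E * Real.log t₀ := rfl
  rw [h4, h2] at h1
  have h5 : E * (w 1 / E + 1) = w 1 + E := by field_simp
  nlinarith

lemma aux_theta {n : ℕ} [NeZero n] (g : Fin n → ℝ) (hg : ∀ i, 0 < g i)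
    (h1 : ∏ i, g i = 1) :
    ∃ θ : Fin n → ℝ, (∀ i, 0 < θ i) ∧ (∑ i, θ i = 1) ∧
      (∀ i, θ (i + 1) = g (i + 1) * θ i) := by
  set θ' : Fin n → ℝ := fun i => ∏ j ∈ Finset.univ.filter (· ≤ i), g j with hθ'
  have hpos : ∀ i, 0 < θ' i := fun i => Finset.prod_pos fun j _ => hg j
  have hrec : ∀ i, θ' (i + 1) = g (i + 1) * θ' i := by
    intro i
    by_cases h : i + 1 = 0
    · -- i is the last element
      have h2 : ((i:ℕ) + 1) % n = 0 := by
        have := congrArg Fin.val h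
        simpa [Fin.add_def] using this
      have hival : (i:ℕ) + 1 = n := by
        have hd := Nat.dvd_of_mod_eq_zero h2
        have hle := Nat.le_of_dvd (by omega) hd
        have := i.isLt
        omega
      have hfull : Finset.univ.filter (· ≤ i) = Finset.univ := by
        ext j
        simp only [Finset.mem_filter, Finset.mem_univ, true_and, iff_true]
        exact Fin.le_def.2 (by have := j.isLt; omega)
      have hzero : Finset.univ.filter (· ≤ (0:Fin n)) = {0} := by
        ext j
        simp [Fin.le_zero_iff]
      rw [h, hθ']
      simp only
      rw [hzero, hfull, h1, Finset.prod_singleton, mul_one]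
    · have hval : ((i + 1 : Fin n) : ℕ) = (i : ℕ) + 1 := by
        by_contra hcon
        have hlt : (i:ℕ) < n := i.isLt
        have : ((i + 1 : Fin n) : ℕ) = ((i:ℕ) + 1) % n := by
          simp [Fin.add_def]
        rcases Nat.lt_or_ge ((i:ℕ) + 1) n with hh | hh
        · rw [Nat.mod_eq_of_lt hh] at this; exact hcon this
        · have hn : (i:ℕ) + 1 = n := by omega
          have : ((i + 1 : Fin n) : ℕ) = 0 := by rw [this, hn, Nat.mod_self]
          exact h (Fin.ext (by simp [this]))
      have hset : Finset.univ.filter (· ≤ i + 1)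
          = insert (i + 1) (Finset.univ.filter (· ≤ i)) := by
        ext j
        simp only [Finset.mem_filter, Finset.mem_univ, true_and, Finset.mem_insert]
        constructor
        · intro hj
          rcases eq_or_lt_of_le hj with he | hl
          · exact Or.inl he
          · right
            have := Fin.lt_def.1 hl
            rw [hval] at this
            exact Fin.le_def.2 (by omega)
        · intro hj
          rcases hj with he | hle
          · exact le_of_eq he
          · have := Fin.le_def.1 hle
            exact Fin.le_def.2 (by rw [hval]; omega)
      have hnotmem : i + 1 ∉ Finset.univ.filter (· ≤ i) := by
        simp only [Finset.mem_filter, Finset.mem_univ, true_and]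
        intro hcon
        have := Fin.le_def.1 hcon
        rw [hval] at this
        omega
      rw [hθ']
      simp only
      rw [hset, Finset.prod_insert hnotmem]
  set S : ℝ := ∑ i, θ' i with hS
  have hSpos : 0 < S := Finset.sum_pos (fun i _ => hpos i) ⟨0, Finset.mem_univ 0⟩
  refine ⟨fun i => θ' i / S, fun i => div_pos (hpos i) hSpos, ?_, ?_⟩
  · rw [← Finset.sum_div, ← hS, div_self (ne_of_gt hSpos)]
  · intro i
    simp only
    rw [hrec i]
    ring

/-- Rate iteration for the bootstrap. -/
def auxRate {n : ℕ} [NeZero n] (p α : Fin n → ℝ) : ℕ → Fin n → ℝ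
  | 0 => fun _ => 0
  | (k+1) => fun i => max 0 (p i * auxRate p α k (i - 1) + 1 - α i)

/-- Generalised Gronwall inequality: the cyclic system of differential inequalities
`x_i'(t) ≥ c_i t^{-α_i} x_{i-1}(t)^{p_i}` on `[1,∞)` with positive values, `p_i ≥ 1`,
`∏ p_i > 1` and `∑ α_i ≤ n`, has no global solution. -/
theorem stmt_1 (n : ℕ) [NeZero n] (c p α : Fin n → ℝ)
    (hc : ∀ i, 0 < c i) (hp : ∀ i, 1 ≤ p i)
    (hprod : 1 < ∏ i, p i) (hα : ∑ i, α i ≤ (n : ℝ)) :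
    ¬ ∃ (x x' : Fin n → ℝ → ℝ),
      (∀ i t, 1 ≤ t → 0 < x i t) ∧
      (∀ i t, 1 ≤ t → HasDerivWithinAt (x i) (x' i t) (Set.Ici 1) t) ∧
      (∀ i t, 1 ≤ t → c i * t ^ (-(α i)) * (x (i - 1) t) ^ (p i) ≤ x' i t) := by
  rintro ⟨x, x', hpos, hderiv, hineq⟩
  have hn0 : 0 < n := Nat.pos_of_ne_zero (NeZero.ne n)
  have hp0 : ∀ i, (0:ℝ) < p i := fun i => lt_of_lt_of_le one_pos (hp i)
  -- positivity of the forcing term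
  have hforce : ∀ i t, 1 ≤ t → 0 < c i * t ^ (-(α i)) * (x (i-1) t) ^ (p i) := by
    intro i t ht
    have ht0 : (0:ℝ) < t := lt_of_lt_of_le one_pos ht
    have h1 := Real.rpow_pos_of_pos ht0 (-(α i))
    have h2 := Real.rpow_pos_of_pos (hpos (i-1) t ht) (p i)
    exact mul_pos (mul_pos (hc i) h1) h2
  -- monotonicity of each component
  have hmono : ∀ i a b, 1 ≤ a → a ≤ b → x i a ≤ x i b := by
    intro i a b h1 hab
    have h := aux_mono h1 hab (f := x i) (f' := x' i)
      (g := fun _ => (0:ℝ)) (g' := fun _ => (0:ℝ)) (hderiv i)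
      (fun s _ _ => hasDerivAt_const s 0)
      (fun s hs _ => le_trans (hforce i s (le_trans h1 hs)).le
        (hineq i s (le_trans h1 hs)))
    simpa using h
  -- weights
  set P : ℝ := ∏ i, p i with hPdef
  have hPpos : 0 < P := Finset.prod_pos fun i _ => hp0 i
  set Q : ℝ := P ^ ((n:ℝ)⁻¹) with hQdef
  have hn0' : (0:ℝ) < (n:ℝ) := by exact_mod_cast hn0
  have hQ1 : 1 < Q := by
    rw [hQdef, Real.one_lt_rpow_iff_of_pos hPpos]
    exact Or.inl ⟨hprod, inv_pos.2 hn0'⟩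
  have hQ0 : 0 < Q := by linarith
  set ρ : ℝ := Q - 1 with hρdef
  have hρ : 0 < ρ := by rw [hρdef]; linarith
  have hQn : Q ^ (n : ℕ) = P := by
    rw [hQdef, ← Real.rpow_natCast (P ^ ((n:ℝ)⁻¹)) n, ← Real.rpow_mul hPpos.le,
      inv_mul_cancel₀ (ne_of_gt hn0'), Real.rpow_one]
  obtain ⟨θ, hθpos, hθsum, hθrec⟩ := aux_theta (fun i => Q / p i)
    (fun i => div_pos hQ0 (hp0 i))
    (by
      rw [Finset.prod_div_distrib, Finset.prod_const, Finset.card_univ,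
        Fintype.card_fin, hQn, div_self (ne_of_gt hPpos)])
  have hθp : ∀ i, p i * θ i = Q * θ (i-1) := by
    intro i
    have h := hθrec (i-1)
    rw [sub_add_cancel] at h
    rw [h]
    field_simp
    exact mul_div_cancel_left₀ _ (ne_of_gt (hp0 i))
  -- key quantities
  set σ : ℝ := ∑ i, θ i * α i with hσdef
  set lC : ℝ := ∑ i, θ i * Real.log (c i) with hlCdef
  set y : ℝ → ℝ := fun t => ∑ i, θ i * Real.log (x i t) with hydef
  set y' : ℝ → ℝ := fun t => ∑ i, θ i * (x' i t / x i t) with hy'def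
  have hyder : ∀ t, 1 ≤ t → HasDerivWithinAt y (y' t) (Set.Ici 1) t := by
    intro t ht
    apply HasDerivWithinAt.fun_sum
    intro i _
    exact ((hderiv i t ht).log (ne_of_gt (hpos i t ht))).const_mul (θ i)
  have hkey : ∀ t, 1 ≤ t → Real.exp (lC - σ * Real.log t + ρ * y t) ≤ y' t := by
    intro t ht
    have ht0 : (0:ℝ) < t := lt_of_lt_of_le one_pos ht
    set z : Fin n → ℝ := fun i => c i * t ^ (-(α i)) * (x (i-1) t) ^ (p i) / x i t
      with hzdef
    have hzpos : ∀ i, 0 < z i := fun i => div_pos (hforce i t ht) (hpos i t ht)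
    have h1 : ∑ i, θ i * z i ≤ y' t := by
      apply Finset.sum_le_sum
      intro i _
      apply mul_le_mul_of_nonneg_left _ (hθpos i).le
      exact (div_le_div_iff_of_pos_right (hpos i t ht)).2 (hineq i t ht)
    have hjensen : Real.exp (∑ i, θ i * Real.log (z i)) ≤ ∑ i, θ i * z i := by
      have h := convexOn_exp.map_sum_le (fun i _ => (hθpos i).le) hθsum
        (fun i _ => Set.mem_univ (Real.log (z i)))
      simp only [smul_eq_mul] at h
      calc Real.exp (∑ i, θ i * Real.log (z i)) ≤ ∑ i, θ i * Real.exp (Real.log (z i)) := h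
        _ = ∑ i, θ i * z i := by
            apply Finset.sum_congr rfl
            intro i _
            rw [Real.exp_log (hzpos i)]
    have hlogz : ∀ i, Real.log (z i) = Real.log (c i) - α i * Real.log t
        + p i * Real.log (x (i-1) t) - Real.log (x i t) := by
      intro i
      rw [hzdef]
      simp only
      rw [Real.log_div (ne_of_gt (hforce i t ht)) (ne_of_gt (hpos i t ht)),
        Real.log_mul (ne_of_gt (mul_pos (hc i) (Real.rpow_pos_of_pos ht0 _)))
          (ne_of_gt (Real.rpow_pos_of_pos (hpos (i-1) t ht) _)),
        Real.log_mul (ne_of_gt (hc i)) (ne_of_gt (Real.rpow_pos_of_pos ht0 _)),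
        Real.log_rpow ht0, Real.log_rpow (hpos (i-1) t ht)]
      ring
    have hreidx : ∑ i, θ (i-1) * Real.log (x (i-1) t) = y t :=
      Fintype.sum_equiv (Equiv.subRight (1 : Fin n)) _ _ (fun i => rfl)
    have hsum : ∑ i, θ i * Real.log (z i) = lC - σ * Real.log t + ρ * y t := by
      calc ∑ i, θ i * Real.log (z i)
          = ∑ i, (θ i * Real.log (c i) - θ i * α i * Real.log t
            + Q * (θ (i-1) * Real.log (x (i-1) t)) - θ i * Real.log (x i t)) := by
            apply Finset.sum_congr rfl
            intro i _
            rw [hlogz i]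
            linear_combination Real.log (x (i-1) t) * hθp i
        _ = lC - σ * Real.log t + ρ * y t := by
            rw [Finset.sum_sub_distrib, Finset.sum_add_distrib,
              Finset.sum_sub_distrib, ← Finset.sum_mul, ← Finset.mul_sum, hreidx]
            rw [hlCdef, hσdef, hydef, hρdef]
            ring
    rw [hsum] at hjensen
    exact le_trans hjensen h1
  -- main dichotomy on σ
  rcases le_or_gt σ 1 with hσle | hσgt
  · exact aux_osgood1 hρ hσle hyder hkey
  -- now σ > 1
  -- lower-bound predicate
  set LB : Fin n → ℝ → ℝ → Prop := fun i a m => ∃ A T, 0 < A ∧ 3 ≤ T ∧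
    ∀ t, T ≤ t → A * t ^ a * Real.log t ^ m ≤ x i t with hLBdef
  have hLB0 : ∀ i, LB i 0 0 := by
    intro i
    refine ⟨x i 3, 3, hpos i 3 (by norm_num), le_rfl, ?_⟩
    intro t ht
    rw [Real.rpow_zero, Real.rpow_zero, mul_one, mul_one]
    exact hmono i 3 t (by norm_num) ht
  have hstep1 : ∀ i a m, 0 ≤ m → LB (i-1) a m →
      LB i (p i * a + 1 - α i) (p i * m) := by
    rintro i a m hm ⟨A, T, hA, hT, hb⟩
    obtain ⟨A', T', h1, h2, h3⟩ := aux_U1 (hc i) (hp i) hA hm hT hb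
      (hderiv i) (hpos i) (hineq i)
    exact ⟨A', T', h1, h2, h3⟩
  have hstep2 : ∀ i a m, 0 ≤ m → p i * a - α i = -1 → LB (i-1) a m →
      LB i 0 (p i * m + 1) := by
    rintro i a m hm hcrit ⟨A, T, hA, hT, hb⟩
    obtain ⟨A', T', h1, h2, h3⟩ := aux_U2 (hc i) (hp i) hA hm hT hcrit hb
      (hderiv i) (hpos i) (hineq i)
    exact ⟨A', T', h1, h2, h3⟩
  -- rate iteration
  set r : ℕ → Fin n → ℝ := auxRate p α with hrdef
  have hr0 : ∀ i, r 0 i = 0 := fun i => rfl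
  have hrs : ∀ k i, r (k+1) i = max 0 (p i * r k (i-1) + 1 - α i) := fun k i => rfl
  have hrnn : ∀ k i, 0 ≤ r k i := by
    intro k i
    cases k with
    | zero => rw [hr0]
    | succ k => rw [hrs]; exact le_max_left _ _
  have hrstep : ∀ k i, r k i ≤ r (k+1) i := by
    intro k
    induction k with
    | zero => intro i; rw [hr0]; exact hrnn 1 i
    | succ k ih =>
        intro i
        rw [hrs, hrs]
        apply max_le_max le_rfl
        have := ih (i-1)
        nlinarith [hp0 i, mul_le_mul_of_nonneg_left (ih (i-1)) (hp0 i).le]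
  have hrmono : ∀ i, Monotone fun k => r k i :=
    fun i => monotone_nat_of_le_succ (fun k => hrstep k i)
  have hLBr : ∀ k i, LB i (r k i) 0 := by
    intro k
    induction k with
    | zero => intro i; have := hLB0 i; rwa [← hr0 i] at this
    | succ k ih =>
        intro i
        rcases le_or_gt (p i * r k (i-1) + 1 - α i) 0 with hle0 | hgt
        · rw [hrs, max_eq_left hle0]; exact hLB0 i
        · rw [hrs, max_eq_right hgt.le]
          have h := hstep1 i (r k (i-1)) 0 le_rfl (ih (i-1))
          rwa [mul_zero] at h
  -- the finishing blow-up argument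
  have hfinish : ∀ (e0 s0 g0 T₀ : ℝ), 3 ≤ T₀ → 0 ≤ g0 →
      0 ≤ ρ * s0 - (σ - 1) → 0 < (ρ * s0 - (σ - 1)) + ρ * g0 →
      (∀ T, T₀ ≤ T → e0 + s0 * Real.log T + g0 * Real.log (Real.log T) ≤ y T) →
      False := by
    intro e0 s0 g0 T₀ hT₀3 hg0 hδnn hδ' hbound
    set D : ℝ := ρ * Real.exp lC / (σ - 1) with hDdef
    have hD0 : 0 < D := by
      have h1 : (0:ℝ) < σ - 1 := by linarith
      positivity
    set δ : ℝ := ρ * s0 - (σ - 1) with hδdef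
    set M : ℝ := (1 + |Real.log D + ρ * e0|) / (δ + ρ * g0) with hMdef
    have hM0 : 0 < M := by
      apply div_pos _ hδ'
      have := abs_nonneg (Real.log D + ρ * e0)
      linarith
    set T₁ : ℝ := max T₀ (Real.exp (Real.exp M)) with hT₁def
    have hT₁3 : (3:ℝ) ≤ T₁ := le_trans hT₀3 (le_max_left _ _)
    have hT₁1 : (1:ℝ) ≤ T₁ := by linarith
    have hT₁0 : (0:ℝ) < T₁ := by linarith
    have hlogT₁ : Real.exp M ≤ Real.log T₁ := by
      calc Real.exp M = Real.log (Real.exp (Real.exp M)) := (Real.log_exp _).symm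
        _ ≤ Real.log T₁ := Real.log_le_log (Real.exp_pos _) (le_max_right _ _)
    have hlogT₁0 : (0:ℝ) < Real.log T₁ := lt_of_lt_of_le (Real.exp_pos M) hlogT₁
    have hloglog : M ≤ Real.log (Real.log T₁) := by
      calc M = Real.log (Real.exp M) := (Real.log_exp M).symm
        _ ≤ Real.log (Real.log T₁) := Real.log_le_log (Real.exp_pos M) hlogT₁
    have hMexp : M ≤ Real.exp M := by
      have := Real.add_one_le_exp M
      linarith
    apply aux_osgood2 hρ hσgt hT₁1 hyder hkey (T := T₁)
    have hyb := hbound T₁ (le_max_left _ _)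
    have hry : ρ * (e0 + s0 * Real.log T₁ + g0 * Real.log (Real.log T₁)) ≤ ρ * y T₁ :=
      mul_le_mul_of_nonneg_left hyb hρ.le
    have hgain : 1 + |Real.log D + ρ * e0| ≤
        δ * Real.log T₁ + ρ * g0 * Real.log (Real.log T₁) := by
      have h1 : δ * M ≤ δ * Real.log T₁ :=
        mul_le_mul_of_nonneg_left (le_trans hMexp hlogT₁) hδnn
      have h2 : ρ * g0 * M ≤ ρ * g0 * Real.log (Real.log T₁) :=
        mul_le_mul_of_nonneg_left hloglog (by positivity)
      have h3 : (δ + ρ * g0) * M = 1 + |Real.log D + ρ * e0| := by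
        rw [hMdef, mul_div_cancel₀ _ (ne_of_gt hδ')]
      have h4 : (δ + ρ * g0) * M = δ * M + ρ * g0 * M := by ring
      linarith
    have habs := neg_abs_le (Real.log D + ρ * e0)
    have hmain : -(ρ * y T₁) < Real.log D + (1 - σ) * Real.log T₁ := by
      have hexp1 : ρ * (e0 + s0 * Real.log T₁ + g0 * Real.log (Real.log T₁))
          = ρ * e0 + ρ * s0 * Real.log T₁ + ρ * g0 * Real.log (Real.log T₁) := by
        ring
      have hδexp : δ * Real.log T₁
          = ρ * s0 * Real.log T₁ - (σ - 1) * Real.log T₁ := by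
        rw [hδdef]; ring
      linarith
    calc Real.exp (-(ρ * y T₁)) < Real.exp (Real.log D + (1 - σ) * Real.log T₁) :=
        Real.exp_lt_exp.2 hmain
      _ = D * T₁ ^ (1 - σ) := by
        rw [Real.exp_add, Real.exp_log hD0, Real.rpow_def_of_pos hT₁0, mul_comm (Real.log T₁)]
  -- dichotomy on the rate iteration
  set K : ℝ := (σ - 1) / ρ with hKdef
  by_cases hAcase : ∃ k, K < ∑ i, θ i * r k i
  · -- Case A : rates eventually large
    obtain ⟨k, hk⟩ := hAcase
    choose Af Tf hAf hTf hbf using fun i => hLBr k i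
    set T₀ : ℝ := 3 + ∑ i, Tf i with hT₀def
    have hTfnn : ∀ i, 0 ≤ Tf i := fun i => le_trans (by norm_num) (hTf i)
    have hT₀i : ∀ i, Tf i ≤ T₀ := by
      intro i
      have := Finset.single_le_sum (f := Tf) (fun j _ => hTfnn j) (Finset.mem_univ i)
      rw [hT₀def]
      linarith
    have hT₀3 : (3:ℝ) ≤ T₀ := by
      have : (0:ℝ) ≤ ∑ i, Tf i := Finset.sum_nonneg fun i _ => hTfnn i
      rw [hT₀def]; linarith
    set Sk : ℝ := ∑ i, θ i * r k i with hSkdef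
    set E : ℝ := ∑ i, θ i * Real.log (Af i) with hEdef
    apply hfinish E Sk 0 T₀ hT₀3 le_rfl ?_ ?_ ?_
    · have : σ - 1 < ρ * Sk := by
        rw [hKdef] at hk
        calc σ - 1 = ((σ - 1) / ρ) * ρ := by field_simp
          _ < Sk * ρ := by
            apply mul_lt_mul_of_pos_right hk hρ
          _ = ρ * Sk := mul_comm _ _
      linarith
    · have : σ - 1 < ρ * Sk := by
        rw [hKdef] at hk
        calc σ - 1 = ((σ - 1) / ρ) * ρ := by field_simp
          _ < Sk * ρ := mul_lt_mul_of_pos_right hk hρ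
          _ = ρ * Sk := mul_comm _ _
      linarith
    · intro T hT
      have hT1 : (1:ℝ) ≤ T := by linarith
      have hT0 : (0:ℝ) < T := by linarith
      have hyT : y T = ∑ i, θ i * Real.log (x i T) := rfl
      suffices h : E + Sk * Real.log T ≤ y T by
        have : (0:ℝ) * Real.log (Real.log T) = 0 := zero_mul _
        linarith
      rw [hyT, hEdef, hSkdef, Finset.sum_mul, ← Finset.sum_add_distrib]
      apply Finset.sum_le_sum
      intro i _
      have hb := hbf i T (le_trans (hT₀i i) hT)
      rw [Real.rpow_zero, mul_one] at hb
      have hrT : (0:ℝ) < T ^ (r k i) := Real.rpow_pos_of_pos hT0 _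
      have hlx : Real.log (Af i) + r k i * Real.log T ≤ Real.log (x i T) := by
        calc Real.log (Af i) + r k i * Real.log T
            = Real.log (Af i * T ^ (r k i)) := by
              rw [Real.log_mul (ne_of_gt (hAf i)) (ne_of_gt hrT), Real.log_rpow hT0]
          _ ≤ Real.log (x i T) := Real.log_le_log (mul_pos (hAf i) hrT) hb
      calc θ i * Real.log (Af i) + θ i * r k i * Real.log T
          = θ i * (Real.log (Af i) + r k i * Real.log T) := by ring
        _ ≤ θ i * Real.log (x i T) := mul_le_mul_of_nonneg_left hlx (hθpos i).le
  · -- Case B : rates bounded, critical regime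
    push_neg at hAcase
    have hbd : ∀ i, BddAbove (Set.range fun k => r k i) := by
      intro i
      refine ⟨K / θ i, ?_⟩
      rintro _ ⟨k, rfl⟩
      have h1 : θ i * r k i ≤ ∑ j, θ j * r k j :=
        Finset.single_le_sum (f := fun j => θ j * r k j)
          (fun j _ => mul_nonneg (hθpos j).le (hrnn k j)) (Finset.mem_univ i)
      have h2 := hAcase k
      rw [le_div_iff₀ (hθpos i)]
      calc r k i * θ i = θ i * r k i := mul_comm _ _
        _ ≤ K := le_trans h1 h2
    set rs : Fin n → ℝ := fun i => ⨆ k, r k i with hrsdef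
    have hler : ∀ k i, r k i ≤ rs i := fun k i => le_ciSup (hbd i) k
    have hrsnn : ∀ i, 0 ≤ rs i := fun i => le_trans (le_of_eq (hr0 i).symm) (hler 0 i)
    have htendsto : ∀ i, Filter.Tendsto (fun k => r k i) Filter.atTop (nhds (rs i)) :=
      fun i => tendsto_atTop_ciSup (hrmono i) (hbd i)
    have hfix : ∀ i, rs i = max 0 (p i * rs (i-1) + 1 - α i) := by
      intro i
      have h1 : Filter.Tendsto (fun k => r (k+1) i) Filter.atTop (nhds (rs i)) :=
        (htendsto i).comp (tendsto_add_atTop_nat 1)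
      have h2 : Filter.Tendsto (fun k => max 0 (p i * r k (i-1) + 1 - α i))
          Filter.atTop (nhds (max 0 (p i * rs (i-1) + 1 - α i))) := by
        apply Filter.Tendsto.max tendsto_const_nhds
        exact (((htendsto (i-1)).const_mul (p i)).add_const 1).sub_const (α i)
      have h3 : (fun k => r (k+1) i) = fun k => max 0 (p i * r k (i-1) + 1 - α i) :=
        funext fun k => hrs k i
      rw [h3] at h1
      exact tendsto_nhds_unique h1 h2
    have hge : ∀ i, p i * rs (i-1) + 1 - α i ≤ rs i :=
      fun i => le_of_le_of_eq (le_max_right _ _) (hfix i).symm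
    -- equality analysis
    have hreidx2 : ∑ i, p i * rs (i-1) = ∑ i, p (i+1) * rs i :=
      Fintype.sum_equiv (Equiv.subRight (1 : Fin n)) _ _
        (fun i => by simp only [Equiv.subRight_apply]; rw [sub_add_cancel])
    have hcard : ∑ _i : Fin n, (1:ℝ) = (n:ℝ) := by
      rw [Finset.sum_const, Finset.card_univ, Fintype.card_fin, nsmul_eq_mul, mul_one]
    have hsum0 : (∑ i, (rs i - (p i * rs (i-1) + 1 - α i)))
        + ∑ i, (p (i+1) - 1) * rs i = (∑ i, α i) - n := by
      have e1 : ∑ i, (rs i - (p i * rs (i-1) + 1 - α i))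
          = ∑ i, rs i - ∑ i, p i * rs (i-1) - (n:ℝ) + ∑ i, α i := by
        rw [← hcard, ← Finset.sum_sub_distrib, ← Finset.sum_sub_distrib,
          ← Finset.sum_add_distrib]
        apply Finset.sum_congr rfl
        intro i _
        ring
      have e2 : ∑ i, (p (i+1) - 1) * rs i = ∑ i, p i * rs (i-1) - ∑ i, rs i := by
        calc ∑ i, (p (i+1) - 1) * rs i = ∑ i, (p (i+1) * rs i - rs i) := by
              apply Finset.sum_congr rfl
              intro i _
              ring
          _ = ∑ i, p (i+1) * rs i - ∑ i, rs i := Finset.sum_sub_distrib _ _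
          _ = ∑ i, p i * rs (i-1) - ∑ i, rs i := by rw [hreidx2]
      rw [e1, e2]
      ring
    have hw1nn : ∀ i ∈ Finset.univ, (0:ℝ) ≤ rs i - (p i * rs (i-1) + 1 - α i) :=
      fun i _ => sub_nonneg.2 (hge i)
    have hw2nn : ∀ i ∈ Finset.univ, (0:ℝ) ≤ (p (i+1) - 1) * rs i :=
      fun i _ => mul_nonneg (sub_nonneg.2 (hp (i+1))) (hrsnn i)
    have hsle : (∑ i, (rs i - (p i * rs (i-1) + 1 - α i)))
        + ∑ i, (p (i+1) - 1) * rs i ≤ 0 := by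
      rw [hsum0]; linarith
    have hs1z : ∑ i, (rs i - (p i * rs (i-1) + 1 - α i)) = 0 := by
      have h1 := Finset.sum_nonneg hw1nn
      have h2 := Finset.sum_nonneg hw2nn
      linarith
    have hs2z : ∑ i, (p (i+1) - 1) * rs i = 0 := by
      have h1 := Finset.sum_nonneg hw1nn
      have h2 := Finset.sum_nonneg hw2nn
      linarith
    have heq : ∀ i, rs i = p i * rs (i-1) + 1 - α i := by
      intro i
      have h := (Finset.sum_eq_zero_iff_of_nonneg hw1nn).1 hs1z i (Finset.mem_univ i)
      linarith
    have hcrit : ∀ i, (p (i+1) - 1) * rs i = 0 :=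
      fun i => (Finset.sum_eq_zero_iff_of_nonneg hw2nn).1 hs2z i (Finset.mem_univ i)
    -- σ - 1 = ρ * ∑ θ rs
    have hreidx3 : ∑ i, θ (i-1) * rs (i-1) = ∑ i, θ i * rs i :=
      Fintype.sum_equiv (Equiv.subRight (1 : Fin n)) _ _ (fun i => rfl)
    have hσρ : σ - 1 = ρ * ∑ i, θ i * rs i := by
      calc σ - 1 = ∑ i, θ i * α i - ∑ i, θ i := by rw [hθsum, hσdef]
        _ = ∑ i, (θ i * α i - θ i) := (Finset.sum_sub_distrib _ _).symm
        _ = ∑ i, (Q * (θ (i-1) * rs (i-1)) - θ i * rs i) := by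
            apply Finset.sum_congr rfl
            intro i _
            have h1 := heq i
            have h2 := hθp i
            linear_combination θ i * h1 + rs (i - 1) * h2
        _ = Q * (∑ i, θ (i-1) * rs (i-1)) - ∑ i, θ i * rs i := by
            rw [Finset.sum_sub_distrib, Finset.mul_sum]
        _ = Q * (∑ i, θ i * rs i) - ∑ i, θ i * rs i := by rw [hreidx3]
        _ = ρ * ∑ i, θ i * rs i := by rw [hρdef]; ring
    have hKrs : ∑ i, θ i * rs i = K := by
      rw [hKdef, hσρ]
      field_simp
    -- a critical index
    obtain ⟨j, hj⟩ : ∃ j, 1 < p j := by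
      by_contra hcon
      push_neg at hcon
      have : P ≤ 1 := Finset.prod_le_one (fun i _ => (hp0 i).le) (fun i _ => hcon i)
      linarith
    set z : Fin n := j - 1 with hzdef2
    have hrsz : rs z = 0 := by
      have h := hcrit (j - 1)
      rw [sub_add_cancel] at h
      rcases mul_eq_zero.1 h with h1 | h2
      · exfalso; rw [sub_eq_zero] at h1; rw [h1] at hj; exact lt_irrefl _ hj
      · exact h2
    -- exact attainment of the limit rates
    have hexact : ∀ d : ℕ, ∀ i : Fin n, rs (i - (d : Fin n)) = 0 →
        ∀ k, d ≤ k → r k i = rs i := by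
      intro d
      induction d with
      | zero =>
          intro i hi k _
          rw [Nat.cast_zero, sub_zero] at hi
          have h1 := hler k i
          rw [hi] at h1 ⊢
          exact le_antisymm h1 (hrnn k i)
      | succ d ih =>
          intro i hi k hk
          obtain ⟨k', rfl⟩ : ∃ k', k = k' + 1 := ⟨k - 1, by omega⟩
          have hi' : rs ((i - 1) - (d : Fin n)) = 0 := by
            have hcast : ((d + 1 : ℕ) : Fin n) = (d : Fin n) + 1 := by push_cast; ring
            have hidx : i - 1 - (d : Fin n) = i - ((d : Fin n) + 1) := by
              rw [sub_sub, add_comm]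
            rw [hidx, ← hcast]
            exact hi
          have hprev := ih (i - 1) hi' k' (by omega)
          rw [hrs, hprev, ← heq i, max_eq_right (hrsnn i)]
    have hattain : ∀ i, r n i = rs i := by
      intro i
      apply hexact ((i - z).val) i ?_ n (le_of_lt (i - z).isLt)
      rw [Fin.cast_val_eq_self, sub_sub_cancel]
      exact hrsz
    have hLBs : ∀ i, LB i (rs i) 0 := by
      intro i
      have h := hLBr n i
      rwa [hattain i] at h
    -- the logarithmic gain at the critical index z
    have hcz : p z * rs (z - 1) - α z = -1 := by
      have h := heq z
      rw [hrsz] at h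
      linarith
    have hLBz : LB z 0 1 := by
      have h := hstep2 z (rs (z-1)) 0 le_rfl hcz (hLBs (z-1))
      rwa [mul_zero, zero_add] at h
    -- assemble the bound for y and finish
    choose Af Tf hAf hTf hbf using hLBs
    obtain ⟨Az, Tz, hAz, hTz, hbz⟩ := hLBz
    set T₀ : ℝ := 3 + (∑ i, Tf i) + Tz with hT₀def
    have hTfnn : ∀ i, 0 ≤ Tf i := fun i => le_trans (by norm_num) (hTf i)
    have hTznn : (0:ℝ) ≤ Tz := le_trans (by norm_num) hTz
    have hT₀i : ∀ i, Tf i ≤ T₀ := by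
      intro i
      have := Finset.single_le_sum (f := Tf) (fun j _ => hTfnn j) (Finset.mem_univ i)
      rw [hT₀def]; linarith
    have hT₀z : Tz ≤ T₀ := by
      have : (0:ℝ) ≤ ∑ i, Tf i := Finset.sum_nonneg fun i _ => hTfnn i
      rw [hT₀def]; linarith
    have hT₀3 : (3:ℝ) ≤ T₀ := by
      have : (0:ℝ) ≤ ∑ i, Tf i := Finset.sum_nonneg fun i _ => hTfnn i
      rw [hT₀def]; linarith
    set E' : ℝ := (∑ i ∈ Finset.univ.erase z, θ i * Real.log (Af i))
      + θ z * Real.log Az with hE'def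
    apply hfinish E' K (θ z) T₀ hT₀3 (hθpos z).le ?_ ?_ ?_
    · have : ρ * K = σ - 1 := by rw [hKdef]; field_simp
      linarith
    · have : ρ * K = σ - 1 := by rw [hKdef]; field_simp
      have h2 : 0 < ρ * θ z := mul_pos hρ (hθpos z)
      linarith
    · intro T hT
      have hT1 : (1:ℝ) ≤ T := by linarith
      have hT0 : (0:ℝ) < T := by linarith
      have hlogT1 : (1:ℝ) ≤ Real.log T := by
        have h3 : Real.exp 1 ≤ 3 := by
          have := Real.exp_one_lt_d9
          linarith
        calc (1:ℝ) = Real.log (Real.exp 1) := (Real.log_exp 1).symm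
          _ ≤ Real.log T := Real.log_le_log (Real.exp_pos 1) (by linarith)
      have hlogT0 : (0:ℝ) < Real.log T := by linarith
      have hyT : y T = θ z * Real.log (x z T)
          + ∑ i ∈ Finset.univ.erase z, θ i * Real.log (x i T) :=
        (Finset.add_sum_erase _ _ (Finset.mem_univ z)).symm
      -- bound on the erased sum
      have herase : (∑ i ∈ Finset.univ.erase z, θ i * Real.log (Af i))
          + K * Real.log T
          ≤ ∑ i ∈ Finset.univ.erase z, θ i * Real.log (x i T) := by
        have hKer : ∑ i ∈ Finset.univ.erase z, θ i * rs i = K := by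
          rw [Finset.sum_erase_eq_sub (Finset.mem_univ z), hKrs, hrsz, mul_zero,
            sub_zero]
        calc (∑ i ∈ Finset.univ.erase z, θ i * Real.log (Af i)) + K * Real.log T
            = ∑ i ∈ Finset.univ.erase z,
              (θ i * Real.log (Af i) + θ i * rs i * Real.log T) := by
              rw [Finset.sum_add_distrib, ← Finset.sum_mul, hKer]
          _ ≤ ∑ i ∈ Finset.univ.erase z, θ i * Real.log (x i T) := by
              apply Finset.sum_le_sum
              intro i _
              have hb := hbf i T (le_trans (hT₀i i) hT)
              rw [Real.rpow_zero, mul_one] at hb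
              have hrT : (0:ℝ) < T ^ (rs i) := Real.rpow_pos_of_pos hT0 _
              have hlx : Real.log (Af i) + rs i * Real.log T ≤ Real.log (x i T) := by
                calc Real.log (Af i) + rs i * Real.log T
                    = Real.log (Af i * T ^ (rs i)) := by
                      rw [Real.log_mul (ne_of_gt (hAf i)) (ne_of_gt hrT),
                        Real.log_rpow hT0]
                  _ ≤ Real.log (x i T) := Real.log_le_log (mul_pos (hAf i) hrT) hb
              calc θ i * Real.log (Af i) + θ i * rs i * Real.log T
                  = θ i * (Real.log (Af i) + rs i * Real.log T) := by ring
                _ ≤ θ i * Real.log (x i T) :=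
                    mul_le_mul_of_nonneg_left hlx (hθpos i).le
      -- bound on the z term
      have hzterm : θ z * Real.log Az + θ z * Real.log (Real.log T)
          ≤ θ z * Real.log (x z T) := by
        have hb := hbz T (le_trans hT₀z hT)
        rw [Real.rpow_zero, mul_one, Real.rpow_one] at hb
        have hlx : Real.log Az + Real.log (Real.log T) ≤ Real.log (x z T) := by
          calc Real.log Az + Real.log (Real.log T)
              = Real.log (Az * Real.log T) := by
                rw [Real.log_mul (ne_of_gt hAz) (ne_of_gt hlogT0)]
            _ ≤ Real.log (x z T) :=
                Real.log_le_log (mul_pos hAz hlogT0) hb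
        calc θ z * Real.log Az + θ z * Real.log (Real.log T)
            = θ z * (Real.log Az + Real.log (Real.log T)) := by ring
          _ ≤ θ z * Real.log (x z T) := mul_le_mul_of_nonneg_left hlx (hθpos z).le
      rw [hyT, hE'def]
      linarith
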